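/- Assume b > 1 and 0 < |ξ|² < a·c. Let β > 0 satisfy det(A - β²B) = 0 and a + c - (b+1)β² ≠ 0, and set λ_even := 5β(ab + c - 2β²b)/(a + c - (b+1)β²) and λ_odd := 7β(ab + c - 2β²b)/(a + c - (b+1)β²). Then the two equations 2 λ_even [a + c - (b+1)β²] = 5β(β - λ_even)(λ_even - βb) and 6 λ_odd [a + c - (b+1)β²] = 7β(3β - λ_odd)(λ_odd - 3βb) cannot both hold. (Equivalently, with the same choice of root β, the regions Ω_even and Ω_odd of parameter tetrads (b, a, c, |ξ|) satisfying the respective equations are disjoint.) -/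

import Mathlib

/-- The matrix `A = [[a, ξ], [conj ξ, c]]`. -/
noncomputable def Amat (a c : ℝ) (ξ : ℂ) : Matrix (Fin 2) (Fin 2) ℂ :=
  !![(a : ℂ), ξ; (starRingEnd ℂ) ξ, (c : ℂ)]

/-- The matrix `B = [[1, 0], [0, b]]`. -/
noncomputable def Bmat (b : ℝ) : Matrix (Fin 2) (Fin 2) ℂ :=
  !![1, 0; 0, (b : ℂ)]

/-- STATEMENT 14: with the same root `β`, the even-case condition
`2λ_even[a+c-(b+1)β²] = 5β(β-λ_even)(λ_even-βb)` and the odd-case condition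
`6λ_odd[a+c-(b+1)β²] = 7β(3β-λ_odd)(λ_odd-3βb)` cannot both hold. -/
theorem even_and_odd_conditions_disjoint
    (a c b : ℝ) (ξ : ℂ) (ha : 0 < a) (hc : 0 < c) (hb : 1 < b)
    (hξ : 0 < ‖ξ‖ ^ 2) (hξ' : ‖ξ‖ ^ 2 < a * c)
    (β : ℝ) (hβ : 0 < β)
    (hdet : (Amat a c ξ - ((β : ℂ) ^ 2) • Bmat b).det = 0)
    (hne : a + c - (b + 1) * β ^ 2 ≠ 0)
    (lamE lamO : ℝ)
    (hlamE : lamE = 5 * β * (a * b + c - 2 * β ^ 2 * b) / (a + c - (b + 1) * β ^ 2))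
    (hlamO : lamO = 7 * β * (a * b + c - 2 * β ^ 2 * b) / (a + c - (b + 1) * β ^ 2)) :
    ¬(2 * lamE * (a + c - (b + 1) * β ^ 2) = 5 * β * (β - lamE) * (lamE - β * b) ∧
      6 * lamO * (a + c - (b + 1) * β ^ 2) = 7 * β * (3 * β - lamO) * (lamO - 3 * β * b)) := by
  rintro ⟨h1, h2⟩
  subst hlamE hlamO
  -- From the determinant condition: (a - β²)(c - bβ²) = |ξ|² > 0
  have hdet2 : 0 < (a - β^2) * (c - b * β^2) := by
    have heq : (a - β^2) * (c - b * β^2) = ‖ξ‖ ^ 2 := by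
      simp [Amat, Bmat, Matrix.det_fin_two, Matrix.smul_apply] at hdet
      rw [Complex.sq_norm]
      have h : ((a - β^2) * (c - b * β^2) : ℂ) = (Complex.normSq ξ : ℂ) := by
        rw [← Complex.mul_conj]
        linear_combination hdet
      exact_mod_cast h
    rw [heq]; exact hξ
  set D := a + c - (b + 1) * β ^ 2 with hD
  set M := a * b + c - 2 * β ^ 2 * b with hM
  field_simp at h1 h2
  have hQβ : β^3 * (3*b*D^2 - 3*(1+b)*M*D - 13*M^2) = 0 := by
    linear_combination (-3/2*β) * h1 + (1/2*β) * h2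
  have hβ3 : β^3 ≠ 0 := pow_ne_zero _ hβ.ne'
  have hQ : 3*b*D^2 - 3*(1+b)*M*D - 13*M^2 = 0 :=
    (mul_eq_zero.mp hQβ).resolve_left hβ3
  have hpq : 0 < (D - M) * (M - b * D) := by
    have h : (D - M) * (M - b * D) = (b-1)^2 * ((a - β^2) * (c - b*β^2)) := by
      rw [hD, hM]; ring
    rw [h]
    exact mul_pos (pow_pos (sub_pos.mpr hb) 2) hdet2
  have key : (b-1)^2 * (3*b*D^2 - 3*(1+b)*M*D - 13*M^2)
      + 16*b^2*(D-M)^2 + (20*b+3*(1+b)^2)*((D-M)*(M-b*D)) + 16*(M-b*D)^2 = 0 := by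
    ring
  nlinarith [key, hQ, hpq, sq_nonneg (D-M), sq_nonneg (M-b*D), hb, sq_nonneg b]
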